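/- Weak duality between the witness form and the generalized robustness (half of Eq. (12) of the paper). Let ι, κ be nonempty finite types, let ρ ∈ Matrix (ι×κ) (ι×κ) ℂ be Hermitian, and let W ∈ Matrix (ι×κ) (ι×κ) ℂ be an entanglement witness normalized by W ≤ 𝟙, i.e. W is Hermitian, 𝟙 − W is positive semidefinite, and Re Tr(W τ) ≥ 0 for every separable τ. Suppose s ≥ 0 is a real number and σ ∈ Matrix (ι×κ) (ι×κ) ℂ is a density matrix (positive semidefinite with trace 1) such that (1/(1+s))·(ρ + s·σ) is separable. Then −Re Tr(W ρ) ≤ s. Consequently, the witnessed value −min_{W≤𝟙} Tr(Wρ) never exceeds the generalized robustness R_G(ρ). -/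

import Mathlib

open Matrix Kronecker ComplexOrder

/-- A bipartite matrix is separable if it is a finite sum of Kronecker products of
positive semidefinite matrices. -/
def SeparableState {ι κ : Type*} [Fintype ι] [Fintype κ]
    (τ : Matrix (ι × κ) (ι × κ) ℂ) : Prop :=
  ∃ (n : ℕ) (A : Fin n → Matrix ι ι ℂ) (B : Fin n → Matrix κ κ ℂ),
    (∀ k, (A k).PosSemidef) ∧ (∀ k, (B k).PosSemidef) ∧ τ = ∑ k, (A k) ⊗ₖ (B k)

lemma trace_mul_psd_nonneg {n : Type*} [Fintype n] [DecidableEq n]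
    {P Q : Matrix n n ℂ} (hP : P.PosSemidef) (hQ : Q.PosSemidef) :
    0 ≤ ((P * Q).trace).re := by
  obtain ⟨B, rfl⟩ : ∃ B : Matrix n n ℂ, P = Bᴴ * B := by
    open scoped MatrixOrder in exact CStarAlgebra.nonneg_iff_eq_star_mul_self.mp hP.nonneg
  obtain ⟨C, rfl⟩ : ∃ C : Matrix n n ℂ, Q = Cᴴ * C := by
    open scoped MatrixOrder in exact CStarAlgebra.nonneg_iff_eq_star_mul_self.mp hQ.nonneg
  have h : (Bᴴ * B * (Cᴴ * C)).trace = ((C * Bᴴ)ᴴ * (C * Bᴴ)).trace := by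
    rw [Matrix.conjTranspose_mul, Matrix.conjTranspose_conjTranspose,
      Matrix.mul_assoc, Matrix.trace_mul_comm]
    simp only [Matrix.mul_assoc]
  rw [h]
  have hM := Matrix.posSemidef_conjTranspose_mul_self (C * Bᴴ)
  have hdiag : ∀ i, 0 ≤ (((C * Bᴴ)ᴴ * (C * Bᴴ)) i i).re := fun i => by
    have := hM.dotProduct_mulVec_nonneg (Pi.single i 1)
    rw [Complex.le_def] at this
    simpa [dotProduct, Matrix.mulVec, Pi.single_apply] using this.1
  rw [Matrix.trace, Complex.re_sum]
  exact Finset.sum_nonneg fun i _ => hdiag i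

/-- Weak duality between the witness form and the generalized robustness
(half of Eq. (12)). -/
theorem witness_le_generalizedRobustness
    {ι κ : Type*} [Fintype ι] [DecidableEq ι] [Nonempty ι]
    [Fintype κ] [DecidableEq κ] [Nonempty κ]
    (ρ W : Matrix (ι × κ) (ι × κ) ℂ)
    (hρ : ρ.IsHermitian) (hW : W.IsHermitian)
    (hWle : ((1 : Matrix (ι × κ) (ι × κ) ℂ) - W).PosSemidef)
    (hWwit : ∀ τ : Matrix (ι × κ) (ι × κ) ℂ, SeparableState τ → 0 ≤ ((W * τ).trace).re)
    (s : ℝ) (hs : 0 ≤ s)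
    (σ : Matrix (ι × κ) (ι × κ) ℂ) (hσ : σ.PosSemidef) (hσtr : σ.trace = 1)
    (hmix : SeparableState (((1 : ℂ) / (1 + (s : ℂ))) • (ρ + (s : ℂ) • σ))) :
    -((W * ρ).trace).re ≤ s := by
  have h1s : (0:ℝ) < 1 + s := by linarith
  have hwit := hWwit _ hmix
  -- compute trace of W * (scaled mix)
  have hcalc : (W * (((1 : ℂ) / (1 + (s : ℂ))) • (ρ + (s : ℂ) • σ))).trace
      = ((1 : ℂ) / (1 + (s : ℂ))) * ((W * ρ).trace + (s:ℂ) * (W * σ).trace) := by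
    rw [Matrix.mul_smul, Matrix.trace_smul, Matrix.mul_add, Matrix.trace_add,
      Matrix.mul_smul, Matrix.trace_smul]
    simp [smul_eq_mul]
  rw [hcalc] at hwit
  have hinv : ((1 : ℂ) / (1 + (s : ℂ))) = ((1 / (1 + s) : ℝ) : ℂ) := by
    push_cast; ring
  rw [hinv] at hwit
  have hre : (((1 / (1 + s) : ℝ) : ℂ) * ((W * ρ).trace + (s:ℂ) * (W * σ).trace)).re
      = (1 / (1 + s)) * (((W * ρ).trace).re + s * ((W * σ).trace).re) := by
    rw [Complex.re_ofReal_mul, Complex.add_re, Complex.re_ofReal_mul]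
  rw [hre] at hwit
  have hkey : 0 ≤ ((W * ρ).trace).re + s * ((W * σ).trace).re := by
    by_contra h
    push_neg at h
    nlinarith [mul_pos (by positivity : (0:ℝ) < 1/(1+s)) (neg_pos.mpr h)]
  -- Re Tr(Wσ) ≤ 1
  have hWσ : ((W * σ).trace).re ≤ 1 := by
    have := trace_mul_psd_nonneg hWle hσ
    rw [Matrix.sub_mul, Matrix.trace_sub, Matrix.one_mul, hσtr] at this
    simp only [Complex.sub_re, Complex.one_re] at this
    linarith
  nlinarith
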